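/- The map from a bounded Q-function to its softmax policy is Lipschitz in the following sense: for Q, Q' : A → ℝ on a finite set A, the total variation distance between softmax(Q) and softmax(Q') is at most ‖Q − Q'‖_∞ (up to a universal constant 1), i.e., Σ_a |π_Q(a) − π_{Q'}(a)| ≤ 2‖Q − Q'‖_∞. -/

import Mathlib

open scoped BigOperators

private lemma key_ineq (x : ℝ) (hx : 0 ≤ x) :
    Real.exp (2 * x) - 1 ≤ x * (Real.exp (2 * x) + 1) := by
  have hmono : MonotoneOn (fun t : ℝ => t * (Real.exp (2 * t) + 1) - (Real.exp (2 * t) - 1))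
      (Set.Ici (0 : ℝ)) := by
    have hder : ∀ t : ℝ, HasDerivAt (fun t : ℝ => t * (Real.exp (2 * t) + 1) - (Real.exp (2 * t) - 1))
        (1 * (Real.exp (2 * t) + 1) + t * (Real.exp (2 * t) * 2) - Real.exp (2 * t) * 2) t := by
      intro t
      have he : HasDerivAt (fun t : ℝ => Real.exp (2 * t)) (Real.exp (2 * t) * 2) t := by
        have h := (Real.hasDerivAt_exp (2 * t)).comp t
          ((hasDerivAt_id t).const_mul (2 : ℝ))
        simp only [Function.comp_def, id_eq, mul_one] at h
        exact h
      exact (((hasDerivAt_id t).mul (he.add_const 1)).sub (he.sub_const 1))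
    apply monotoneOn_of_deriv_nonneg (convex_Ici 0)
    · fun_prop
    · intro t _
      exact (hder t).differentiableAt.differentiableWithinAt
    · intro t ht
      rw [(hder t).deriv]
      have h1 : (1 - 2 * t) * Real.exp (2 * t) ≤ 1 := by
        have := Real.add_one_le_exp (-(2 * t))
        calc (1 - 2 * t) * Real.exp (2 * t) ≤ Real.exp (-(2 * t)) * Real.exp (2 * t) := by
              apply mul_le_mul_of_nonneg_right _ (Real.exp_pos _).le
              linarith
          _ = 1 := by rw [← Real.exp_add]; simp
      nlinarith [Real.exp_pos (2 * t)]
  have := hmono (Set.self_mem_Ici) (Set.mem_Ici.mpr hx) hx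
  norm_num at this
  linarith

/-- The softmax map is Lipschitz in total variation: for
`Q, Q' : A → ℝ` on a finite nonempty set `A`,
`∑_a |π_Q(a) − π_{Q'}(a)| ≤ 2 ‖Q − Q'‖_∞`. -/
theorem stmt15 {A : Type*} [Fintype A] [Nonempty A] (Q Q' : A → ℝ) :
    ∑ a, |Real.exp (Q a) / (∑ a', Real.exp (Q a')) -
          Real.exp (Q' a) / (∑ a', Real.exp (Q' a'))| ≤
      2 * Finset.univ.sup' Finset.univ_nonempty (fun a => |Q a - Q' a|) := by
  set ε := Finset.univ.sup' Finset.univ_nonempty (fun a => |Q a - Q' a|) with hε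
  obtain ⟨a₀⟩ := ‹Nonempty A›
  have hε0 : 0 ≤ ε := le_trans (abs_nonneg _)
    (Finset.le_sup' (fun a => |Q a - Q' a|) (Finset.mem_univ a₀))
  have hεb : ∀ a, |Q a - Q' a| ≤ ε := fun a =>
    Finset.le_sup' (fun a => |Q a - Q' a|) (Finset.mem_univ a)
  set S : ℝ := ∑ a', Real.exp (Q a') with hS
  set S' : ℝ := ∑ a', Real.exp (Q' a') with hS'
  have hSpos : 0 < S := Finset.sum_pos (fun a _ => Real.exp_pos _) ⟨a₀, Finset.mem_univ a₀⟩
  have hS'pos : 0 < S' := Finset.sum_pos (fun a _ => Real.exp_pos _) ⟨a₀, Finset.mem_univ a₀⟩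
  -- ratio bounds between the two softmax distributions
  have hSle : S ≤ Real.exp ε * S' := by
    rw [Finset.mul_sum]
    apply Finset.sum_le_sum
    intro a _
    rw [← Real.exp_add]
    apply Real.exp_le_exp.mpr
    have := hεb a
    rw [abs_le] at this
    linarith [this.1, this.2]
  have hS'le : S' ≤ Real.exp ε * S := by
    rw [Finset.mul_sum]
    apply Finset.sum_le_sum
    intro a _
    rw [← Real.exp_add]
    apply Real.exp_le_exp.mpr
    have := hεb a
    rw [abs_le] at this
    linarith [this.1, this.2]
  set p : A → ℝ := fun a => Real.exp (Q a) / S with hp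
  set q : A → ℝ := fun a => Real.exp (Q' a) / S' with hq
  have hppos : ∀ a, 0 < p a := fun a => div_pos (Real.exp_pos _) hSpos
  have hqpos : ∀ a, 0 < q a := fun a => div_pos (Real.exp_pos _) hS'pos
  have hratio : ∀ a, p a ≤ Real.exp (2 * ε) * q a := by
    intro a
    rw [hp, hq]
    rw [div_le_iff₀ hSpos]
    have h1 : Real.exp (Q a) ≤ Real.exp ε * Real.exp (Q' a) := by
      rw [← Real.exp_add]
      apply Real.exp_le_exp.mpr
      have := hεb a; rw [abs_le] at this; linarith [this.1]
    calc Real.exp (Q a) ≤ Real.exp ε * Real.exp (Q' a) := h1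
      _ = Real.exp ε * (Real.exp (Q' a) / S') * S' := by field_simp
      _ ≤ Real.exp ε * (Real.exp (Q' a) / S') * (Real.exp ε * S) := by
          apply mul_le_mul_of_nonneg_left hS'le
          positivity
      _ = Real.exp (2 * ε) * (Real.exp (Q' a) / S') * S := by
          rw [two_mul, Real.exp_add]; ring
  have hratio' : ∀ a, q a ≤ Real.exp (2 * ε) * p a := by
    intro a
    rw [hp, hq]
    rw [div_le_iff₀ hS'pos]
    have h1 : Real.exp (Q' a) ≤ Real.exp ε * Real.exp (Q a) := by
      rw [← Real.exp_add]
      apply Real.exp_le_exp.mpr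
      have := hεb a; rw [abs_le] at this; linarith [this.2]
    calc Real.exp (Q' a) ≤ Real.exp ε * Real.exp (Q a) := h1
      _ = Real.exp ε * (Real.exp (Q a) / S) * S := by field_simp
      _ ≤ Real.exp ε * (Real.exp (Q a) / S) * (Real.exp ε * S') := by
          apply mul_le_mul_of_nonneg_left hSle
          positivity
      _ = Real.exp (2 * ε) * (Real.exp (Q a) / S) * S' := by
          rw [two_mul, Real.exp_add]; ring
  -- pointwise: |p a - q a| ≤ (e^{2ε} - 1) * min (p a) (q a)
  have hpw : ∀ a, |p a - q a| ≤ (Real.exp (2 * ε) - 1) * min (p a) (q a) := by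
    intro a
    rcases le_total (p a) (q a) with h | h
    · rw [abs_of_nonpos (by linarith), min_eq_left h]
      have := hratio' a
      nlinarith
    · rw [abs_of_nonneg (by linarith), min_eq_right h]
      have := hratio a
      nlinarith
  -- sums are 1
  have hpsum : ∑ a, p a = 1 := by
    rw [hp, ← Finset.sum_div, ← hS, div_self hSpos.ne']
  have hqsum : ∑ a, q a = 1 := by
    rw [hq, ← Finset.sum_div, ← hS', div_self hS'pos.ne']
  -- min identity: min x y = (x + y - |x - y|)/2
  have hminsum : ∑ a, min (p a) (q a) = 1 - (∑ a, |p a - q a|) / 2 := by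
    have : ∀ a, min (p a) (q a) = (p a + q a - |p a - q a|) / 2 := by
      intro a
      rcases le_total (p a) (q a) with h | h
      · rw [min_eq_left h, abs_of_nonpos (by linarith)]; ring
      · rw [min_eq_right h, abs_of_nonneg (by linarith)]; ring
    rw [Finset.sum_congr rfl (fun a _ => this a)]
    rw [← Finset.sum_div, Finset.sum_sub_distrib, Finset.sum_add_distrib, hpsum, hqsum]
    ring
  set T : ℝ := ∑ a, |p a - q a| with hT
  have hT0 : 0 ≤ T := Finset.sum_nonneg (fun a _ => abs_nonneg _)
  have hTle : T ≤ (Real.exp (2 * ε) - 1) * (1 - T / 2) := by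
    calc T ≤ ∑ a, (Real.exp (2 * ε) - 1) * min (p a) (q a) :=
          Finset.sum_le_sum (fun a _ => hpw a)
      _ = (Real.exp (2 * ε) - 1) * (1 - T / 2) := by
          rw [← Finset.mul_sum, hminsum]
  have hkey := key_ineq ε hε0
  have hexp1 : 1 ≤ Real.exp (2 * ε) := Real.one_le_exp (by linarith)
  -- T (e^{2ε} + 1) ≤ 2 (e^{2ε} - 1) ≤ 2 ε (e^{2ε} + 1)
  nlinarith [Real.exp_pos (2 * ε)]
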